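/- Let R be a 2-torsion free σ-prime ring, U a σ-Lie ideal of R not contained in the center Z(R), and a, b ∈ R. If aUb = 0 and σ(a)Ub = 0, or if aUb = 0 and aUσ(b) = 0, then a = 0 or b = 0. -/

import Mathlib

section Aux
variable {R : Type*} [Ring R]

private lemma sig_zero (σ : R → R) (hσadd : ∀ x y : R, σ (x + y) = σ x + σ y) :
    σ (0 : R) = 0 := by
  have h := hσadd 0 0
  rw [add_zero] at h
  have h2 : σ (0:R) + σ 0 = σ 0 + 0 := by rw [add_zero]; exact h.symm
  exact add_left_cancel h2

private lemma sig_sub (σ : R → R) (hσadd : ∀ x y : R, σ (x + y) = σ x + σ y) :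
    ∀ x y : R, σ (x - y) = σ x - σ y := by
  intro x y
  have h := hσadd (x - y) y
  rw [sub_add_cancel] at h
  rw [eq_sub_iff_add_eq]
  exact h.symm

private lemma sig_one (σ : R → R) (hσmul : ∀ x y : R, σ (x * y) = σ y * σ x)
    (hσinv : ∀ x : R, σ (σ x) = x) : σ (1 : R) = 1 := by
  have h : ∀ y : R, y = σ 1 * y := by
    intro y
    have h2 := hσmul (σ y) 1
    rw [mul_one, hσinv] at h2
    exact h2
  have := h 1
  rw [mul_one] at this
  exact this.symm

private lemma sig_neg (σ : R → R) (hσadd : ∀ x y : R, σ (x + y) = σ x + σ y) :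
    ∀ x : R, σ (-x) = - σ x := by
  intro x
  have h := hσadd (-x) x
  simp only [neg_add_cancel] at h
  rw [sig_zero σ hσadd] at h
  exact eq_neg_of_add_eq_zero_left h.symm

-- A = subring closure of U is a Lie ideal
private lemma lieA (U : AddSubgroup R) (hLie : ∀ u ∈ U, ∀ r : R, u * r - r * u ∈ U) :
    ∀ z ∈ Subring.closure (U : Set R), ∀ r : R,
      z * r - r * z ∈ Subring.closure (U : Set R) := by
  intro z hz
  induction hz using Subring.closure_induction with
  | mem u hu => exact fun r => Subring.subset_closure (hLie u hu r)
  | zero => intro r; simpa using zero_mem (Subring.closure (U : Set R))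
  | one => intro r; simpa using zero_mem (Subring.closure (U : Set R))
  | add y z hy hz ihy ihz =>
      intro r
      have e : (y + z) * r - r * (y + z) = (y * r - r * y) + (z * r - r * z) := by noncomm_ring
      rw [e]; exact add_mem (ihy r) (ihz r)
  | neg y hy ihy =>
      intro r
      have e : (-y) * r - r * (-y) = -(y * r - r * y) := by noncomm_ring
      rw [e]; exact neg_mem (ihy r)
  | mul y z hy hz ihy ihz =>
      intro r
      have e : (y * z) * r - r * (y * z) = y * (z * r - r * z) + (y * r - r * y) * z := by
        noncomm_ring
      rw [e]; exact add_mem (mul_mem hy (ihz r)) (mul_mem (ihy r) hz)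

-- A is σ-stable
private lemma sigA (σ : R → R) (U : AddSubgroup R)
    (hσadd : ∀ x y : R, σ (x + y) = σ x + σ y)
    (hσmul : ∀ x y : R, σ (x * y) = σ y * σ x)
    (hσinv : ∀ x : R, σ (σ x) = x)
    (hσU : ∀ u ∈ U, σ u ∈ U) :
    ∀ z ∈ Subring.closure (U : Set R), σ z ∈ Subring.closure (U : Set R) := by
  intro z hz
  induction hz using Subring.closure_induction with
  | mem u hu => exact Subring.subset_closure (hσU u hu)
  | zero => rw [sig_zero σ hσadd]; exact zero_mem _
  | one => rw [sig_one σ hσmul hσinv]; exact one_mem _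
  | add y z hy hz ihy ihz => rw [hσadd]; exact add_mem ihy ihz
  | neg y hy ihy => rw [sig_neg σ hσadd]; exact neg_mem ihy
  | mul y z hy hz ihy ihz => rw [hσmul]; exact mul_mem ihz ihy


-- sliding property extends from U to the subring closure A
private lemma slideA (U : AddSubgroup R) (x w : R)
    (hP : ∀ u ∈ U, ∀ t : R, x * (u * (t * w)) = x * (t * (u * w))) :
    ∀ z ∈ Subring.closure (U : Set R), ∀ t : R,
      x * (z * (t * w)) = x * (t * (z * w)) := by
  intro z hz
  induction hz using Subring.closure_induction with
  | mem u hu => exact hP u hu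
  | zero => intro t; simp
  | one => intro t; simp
  | add y z hy hz ihy ihz =>
      intro t
      have e1 : x * ((y + z) * (t * w)) = x * (y * (t * w)) + x * (z * (t * w)) := by
        noncomm_ring
      have e2 : x * (t * ((y + z) * w)) = x * (t * (y * w)) + x * (t * (z * w)) := by
        noncomm_ring
      rw [e1, e2, ihy t, ihz t]
  | neg y hy ihy =>
      intro t
      have e1 : x * ((-y) * (t * w)) = -(x * (y * (t * w))) := by noncomm_ring
      have e2 : x * (t * ((-y) * w)) = -(x * (t * (y * w))) := by noncomm_ring
      rw [e1, e2, ihy t]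
  | mul y z hy hz ihy ihz =>
      intro t
      calc x * ((y * z) * (t * w)) = x * (y * ((z * t) * w)) := by
              rw [mul_assoc y z (t*w), mul_assoc z t w]
        _ = x * ((z * t) * (y * w)) := ihy (z * t)
        _ = x * (z * ((t * y) * w)) := by rw [mul_assoc z t (y*w), mul_assoc t y w]
        _ = x * ((t * y) * (z * w)) := ihz (t * y)
        _ = x * (t * ((y * z) * w)) := by rw [mul_assoc t y (z*w), mul_assoc y z w]

private def MSet (U : AddSubgroup R) : Set R :=
  {y : R | ∃ p ∈ Subring.closure (U : Set R), ∃ q ∈ Subring.closure (U : Set R),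
    ∃ r : R, ∃ s : R, y = r * ((p * q - q * p) * s)}

private def MS (U : AddSubgroup R) : AddSubgroup R := AddSubgroup.closure (MSet U)

private lemma mem_MSet (U : AddSubgroup R) (y : R) :
    y ∈ MSet U ↔ ∃ p ∈ Subring.closure (U : Set R), ∃ q ∈ Subring.closure (U : Set R),
      ∃ r : R, ∃ s : R, y = r * ((p * q - q * p) * s) := Iff.rfl

-- M ⊆ A
private lemma msubA (U : AddSubgroup R) (hLie : ∀ u ∈ U, ∀ r : R, u * r - r * u ∈ U) :
    ∀ m ∈ MS U, m ∈ Subring.closure (U : Set R) := by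
  intro m hm
  induction hm using AddSubgroup.closure_induction with
  | mem y hy =>
      obtain ⟨p, hp, q, hq, r, s, rfl⟩ := hy
      have hstep_a : ∀ r : R, r * (p * q - q * p) ∈ Subring.closure (U : Set R) := by
        intro r
        have e : r * (p * q - q * p)
            = (p * (r * q) - (r * q) * p) - (p * r - r * p) * q := by noncomm_ring
        rw [e]
        exact sub_mem (lieA U hLie p hp (r * q)) (mul_mem (lieA U hLie p hp r) hq)
      have e2 : r * ((p * q - q * p) * s)
          = ((r * (p * q - q * p)) * s - s * (r * (p * q - q * p)))
            + (s * r) * (p * q - q * p) := by noncomm_ring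
      rw [e2]
      exact add_mem (lieA U hLie _ (hstep_a r) s) (hstep_a (s * r))
  | zero => exact zero_mem _
  | add y z hy hz ihy ihz => exact add_mem ihy ihz
  | neg y hy ihy => exact neg_mem ihy

private lemma mAbsL (U : AddSubgroup R) : ∀ r : R, ∀ m ∈ MS U, r * m ∈ MS U := by
  intro r m hm
  induction hm using AddSubgroup.closure_induction with
  | mem y hy =>
      obtain ⟨p, hp, q, hq, r', s, rfl⟩ := hy
      refine AddSubgroup.subset_closure ⟨p, hp, q, hq, r * r', s, ?_⟩
      rw [mul_assoc]
  | zero => rw [mul_zero]; exact zero_mem _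
  | add y z hy hz ihy ihz => rw [mul_add]; exact add_mem ihy ihz
  | neg y hy ihy => rw [mul_neg]; exact neg_mem ihy

private lemma mAbsR (U : AddSubgroup R) : ∀ m ∈ MS U, ∀ s : R, m * s ∈ MS U := by
  intro m hm s
  induction hm using AddSubgroup.closure_induction with
  | mem y hy =>
      obtain ⟨p, hp, q, hq, r', s', rfl⟩ := hy
      refine AddSubgroup.subset_closure ⟨p, hp, q, hq, r', s' * s, ?_⟩
      rw [mul_assoc, mul_assoc]
  | zero => rw [zero_mul]; exact zero_mem _
  | add y z hy hz ihy ihz => rw [add_mul]; exact add_mem ihy ihz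
  | neg y hy ihy => rw [neg_mul]; exact neg_mem ihy

private lemma mSig (σ : R → R) (U : AddSubgroup R)
    (hσadd : ∀ x y : R, σ (x + y) = σ x + σ y)
    (hσmul : ∀ x y : R, σ (x * y) = σ y * σ x)
    (hσinv : ∀ x : R, σ (σ x) = x)
    (hσU : ∀ u ∈ U, σ u ∈ U) :
    ∀ m ∈ MS U, σ m ∈ MS U := by
  intro m hm
  induction hm using AddSubgroup.closure_induction with
  | mem y hy =>
      obtain ⟨p, hp, q, hq, r, s, rfl⟩ := hy
      have e : σ (r * ((p * q - q * p) * s))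
          = (σ s * (σ q * σ p - σ p * σ q)) * σ r := by
        rw [hσmul, hσmul, sig_sub σ hσadd, hσmul, hσmul]
      rw [e]
      have e2 : (σ s * (σ q * σ p - σ p * σ q)) * σ r
          = -(σ s * ((σ p * σ q - σ q * σ p) * σ r)) := by noncomm_ring
      rw [e2]
      exact neg_mem (AddSubgroup.subset_closure
        ⟨σ p, sigA σ U hσadd hσmul hσinv hσU p hp,
         σ q, sigA σ U hσadd hσmul hσinv hσU q hq, σ s, σ r, rfl⟩)
  | zero => rw [sig_zero σ hσadd]; exact zero_mem _
  | add y z hy hz ihy ihz => rw [hσadd]; exact add_mem ihy ihz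
  | neg y hy ihy => rw [sig_neg σ hσadd]; exact neg_mem ihy

private def JSet (U : AddSubgroup R) : Set R :=
  {y : R | ∃ m ∈ MS U, ∃ r : R, ∃ t : R, y = r * (m * t - t * m)}

private def JS (U : AddSubgroup R) : AddSubgroup R := AddSubgroup.closure (JSet U)

private lemma jAbsL (U : AddSubgroup R) : ∀ r : R, ∀ j ∈ JS U, r * j ∈ JS U := by
  intro r j hj
  induction hj using AddSubgroup.closure_induction with
  | mem y hy =>
      obtain ⟨m, hm, r', t, rfl⟩ := hy
      refine AddSubgroup.subset_closure ⟨m, hm, r * r', t, ?_⟩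
      rw [mul_assoc]
  | zero => rw [mul_zero]; exact zero_mem _
  | add y z hy hz ihy ihz => rw [mul_add]; exact add_mem ihy ihz
  | neg y hy ihy => rw [mul_neg]; exact neg_mem ihy

private lemma jAbsR (U : AddSubgroup R) : ∀ j ∈ JS U, ∀ s : R, j * s ∈ JS U := by
  intro j hj s
  induction hj using AddSubgroup.closure_induction with
  | mem y hy =>
      obtain ⟨m, hm, r, t, rfl⟩ := hy
      have e : (r * (m * t - t * m)) * s
          = r * (m * (t * s) - (t * s) * m) - (r * t) * (m * s - s * m) := by noncomm_ring
      rw [e]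
      exact sub_mem (AddSubgroup.subset_closure ⟨m, hm, r, t * s, rfl⟩)
        (AddSubgroup.subset_closure ⟨m, hm, r * t, s, rfl⟩)
  | zero => rw [zero_mul]; exact zero_mem _
  | add y z hy hz ihy ihz => rw [add_mul]; exact add_mem ihy ihz
  | neg y hy ihy => rw [neg_mul]; exact neg_mem ihy

private lemma jSig (σ : R → R) (U : AddSubgroup R)
    (hσadd : ∀ x y : R, σ (x + y) = σ x + σ y)
    (hσmul : ∀ x y : R, σ (x * y) = σ y * σ x)
    (hσinv : ∀ x : R, σ (σ x) = x)
    (hσU : ∀ u ∈ U, σ u ∈ U) :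
    ∀ j ∈ JS U, σ j ∈ JS U := by
  intro j hj
  induction hj using AddSubgroup.closure_induction with
  | mem y hy =>
      obtain ⟨m, hm, r, t, rfl⟩ := hy
      have e : σ (r * (m * t - t * m))
          = (σ t * σ m - σ m * σ t) * σ r := by
        rw [hσmul, sig_sub σ hσadd, hσmul, hσmul]
      have e2 : (σ t * σ m - σ m * σ t) * σ r
          = -((1 : R) * (σ m * σ t - σ t * σ m)) * σ r := by noncomm_ring
      have hg : (1 : R) * (σ m * σ t - σ t * σ m) ∈ JS U :=
        AddSubgroup.subset_closure ⟨σ m, mSig σ U hσadd hσmul hσinv hσU m hm, 1, σ t, rfl⟩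
      rw [e, e2, neg_mul]
      exact neg_mem (jAbsR U _ hg (σ r))
  | zero => rw [sig_zero σ hσadd]; exact zero_mem _
  | add y z hy hz ihy ihz => rw [hσadd]; exact add_mem ihy ihz
  | neg y hy ihy => rw [sig_neg σ hσadd]; exact neg_mem ihy



-- key σ-prime annihilation via a σ-stable "ideal-like" additive subgroup
private lemma annih (σ : R → R)
    (hsp : ∀ a b : R, (∀ r : R, a * r * b = 0) → (∀ r : R, a * r * σ b = 0) → a = 0 ∨ b = 0)
    (I : AddSubgroup R)
    (habsL : ∀ r : R, ∀ j ∈ I, r * j ∈ I)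
    (habsR : ∀ j ∈ I, ∀ r : R, j * r ∈ I)
    (hsig : ∀ j ∈ I, σ j ∈ I)
    (j₀ : R) (hj : j₀ ∈ I) (hj0 : j₀ ≠ 0)
    (X Y : R)
    (h1 : ∀ j ∈ I, X * (j * Y) = 0)
    (h2 : ∀ j ∈ I, X * (j * σ Y) = 0) :
    X = 0 ∨ Y = 0 := by
  by_cases hY : Y = 0
  · exact Or.inr hY
  · left
    have hXj : ∀ j ∈ I, X * j = 0 := by
      intro j hj'
      rcases hsp (X * j) Y
        (fun r => by
          have h := h1 (j * r) (habsR j hj' r)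
          rw [mul_assoc X j r, mul_assoc X (j * r) Y]
          exact h)
        (fun r => by
          have h := h2 (j * r) (habsR j hj' r)
          rw [mul_assoc X j r, mul_assoc X (j * r) (σ Y)]
          exact h) with h | h
      · exact h
      · exact absurd h hY
    rcases hsp X j₀
      (fun r => by rw [mul_assoc]; exact hXj (r * j₀) (habsL r j₀ hj))
      (fun r => by rw [mul_assoc]; exact hXj (r * σ j₀) (habsL r (σ j₀) (hsig j₀ hj))) with h | h
    · exact h
    · exact absurd h hj0

-- a commutative σ-Lie ideal is central
private lemma lemB (σ : R → R) (U : AddSubgroup R)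
    (hσadd : ∀ x y : R, σ (x + y) = σ x + σ y)
    (hσmul : ∀ x y : R, σ (x * y) = σ y * σ x)
    (hσinv : ∀ x : R, σ (σ x) = x)
    (htor : ∀ x : R, x + x = 0 → x = 0)
    (hsp : ∀ a b : R, (∀ r : R, a * r * b = 0) → (∀ r : R, a * r * σ b = 0) → a = 0 ∨ b = 0)
    (hLie : ∀ u ∈ U, ∀ r : R, u * r - r * u ∈ U)
    (hσU : ∀ u ∈ U, σ u ∈ U)
    (hUU : ∀ u ∈ U, ∀ v ∈ U, u * v = v * u) :
    ∀ u ∈ U, ∀ r : R, u * r = r * u := by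
  have mix : ∀ u ∈ U, ∀ v ∈ U, ∀ r s : R,
      (u * r - r * u) * (v * s - s * v) + (v * r - r * v) * (u * s - s * u) = 0 := by
    intro u hu v hv r s
    have hX := hUU u hu _ (hLie v hv (r * s))
    have hY := hUU u hu _ (hLie v hv s)
    have hZ := hUU u hu _ (hLie v hv r)
    linear_combination (norm := noncomm_ring) hX - r * hY - hZ * s
  have same : ∀ u ∈ U, ∀ r s : R, (u * r - r * u) * (u * s - s * u) = 0 := by
    intro u hu r s
    exact htor _ (by linear_combination (norm := noncomm_ring) mix u hu u hu r s)
  have prod : ∀ u ∈ U, ∀ r s t : R, (u * r - r * u) * s * (u * t - t * u) = 0 := by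
    intro u hu r s t
    have e1 := same u hu (r * s) t
    have e2 := same u hu s t
    linear_combination (norm := noncomm_ring) e1 - r * e2
  have cent : ∀ u ∈ U, (σ u = u ∨ σ u = -u) → ∀ r : R, u * r = r * u := by
    intro u hu hsu r
    have e2 : ∀ s : R, (u * r - r * u) * s * σ (u * r - r * u) = 0 := by
      intro s
      have eσ : σ (u * r - r * u) = σ r * σ u - σ u * σ r := by
        rw [sig_sub σ hσadd, hσmul, hσmul]
      have hpr := prod u hu r s (σ r)
      rcases hsu with h | h
      · rw [eσ, h]; linear_combination (norm := noncomm_ring) -hpr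
      · rw [eσ, h]; linear_combination (norm := noncomm_ring) hpr
    rcases hsp (u * r - r * u) (u * r - r * u) (fun s => prod u hu r s r) e2 with h | h
    · exact sub_eq_zero.mp h
    · exact sub_eq_zero.mp h
  intro u hu r
  have hup : (u + σ u) ∈ U := U.add_mem hu (hσU u hu)
  have hsup : σ (u + σ u) = u + σ u := by rw [hσadd, hσinv, add_comm]
  have hum : (u - σ u) ∈ U := U.sub_mem hu (hσU u hu)
  have hsum : σ (u - σ u) = -(u - σ u) := by rw [sig_sub σ hσadd, hσinv]; abel
  have c1 := cent _ hup (Or.inl hsup) r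
  have c2 := cent _ hum (Or.inr hsum) r
  have key : (u * r - r * u) + (u * r - r * u) = 0 := by
    linear_combination (norm := noncomm_ring) c1 + c2
  exact sub_eq_zero.mp (htor _ key)



-- Main lemma: x U w = 0 with σ w = ± w forces x = 0 or w = 0
private lemma lemC (σ : R → R) (U : AddSubgroup R)
    (hσadd : ∀ x y : R, σ (x + y) = σ x + σ y)
    (hσmul : ∀ x y : R, σ (x * y) = σ y * σ x)
    (hσinv : ∀ x : R, σ (σ x) = x)
    (htor : ∀ x : R, x + x = 0 → x = 0)
    (hsp : ∀ a b : R, (∀ r : R, a * r * b = 0) → (∀ r : R, a * r * σ b = 0) → a = 0 ∨ b = 0)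
    (hLie : ∀ u ∈ U, ∀ r : R, u * r - r * u ∈ U)
    (hσU : ∀ u ∈ U, σ u ∈ U)
    (hUnc : ¬ (∀ u ∈ U, ∀ r : R, u * r = r * u))
    (x w : R)
    (hxw : ∀ u ∈ U, x * (u * w) = 0)
    (hw : σ w = w ∨ σ w = -w) :
    x = 0 ∨ w = 0 := by
  classical
  -- sliding property on U, then on A
  have hP : ∀ u ∈ U, ∀ t : R, x * (u * (t * w)) = x * (t * (u * w)) := by
    intro u hu t
    have h := hxw _ (hLie u hu t)
    linear_combination (norm := noncomm_ring) h
  have slide := slideA U x w hP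
  by_cases hUU : ∀ u ∈ U, ∀ v ∈ U, u * v = v * u
  · exact absurd (lemB σ U hσadd hσmul hσinv htor hsp hLie hσU hUU) hUnc
  push_neg at hUU
  obtain ⟨u₀, hu₀, v₀, hv₀, hne⟩ := hUU
  have hc₀M : u₀ * v₀ - v₀ * u₀ ∈ MS U := by
    apply AddSubgroup.subset_closure
    exact ⟨u₀, Subring.subset_closure hu₀, v₀, Subring.subset_closure hv₀, 1, 1,
      by noncomm_ring⟩
  have hc₀0 : u₀ * v₀ - v₀ * u₀ ≠ 0 := sub_ne_zero.mpr hne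
  by_cases hMZ : ∀ m ∈ MS U, ∀ r : R, m * r = r * m
  · -- M central ⟹ R commutative ⟹ contradiction
    have hcomm : ∀ r s : R, r * s = s * r := by
      intro r s
      have hz : ∀ m ∈ MS U, (r * s - s * r) * m = 0 := by
        intro m hm
        have h1 := hMZ (s * m) (mAbsL U s m hm) r
        have h2 := hMZ m hm r
        linear_combination (norm := noncomm_ring) s * h2 - h1
      rcases hsp (r * s - s * r) (u₀ * v₀ - v₀ * u₀)
        (fun t => by
          have := hz _ (mAbsL U t _ hc₀M)
          rw [mul_assoc]; exact this)
        (fun t => by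
          have := hz _ (mAbsL U t _ (mSig σ U hσadd hσmul hσinv hσU _ hc₀M))
          rw [mul_assoc]; exact this) with h | h
      · exact sub_eq_zero.mp h
      · exact absurd h hc₀0
    exact absurd (fun u _ r => hcomm u r) hUnc
  push_neg at hMZ
  obtain ⟨m₁, hm₁, r₁, hner⟩ := hMZ
  have hj₀ : m₁ * r₁ - r₁ * m₁ ∈ JS U :=
    AddSubgroup.subset_closure ⟨m₁, hm₁, 1, r₁, by noncomm_ring⟩
  have hj₀0 : m₁ * r₁ - r₁ * m₁ ≠ 0 := sub_ne_zero.mpr hner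
  have hMA := msubA U hLie
  -- first annihilation: (x*w) J w = 0
  have hV1 : ∀ j ∈ JS U, (x * w) * (j * w) = 0 := by
    intro j hj
    induction hj using AddSubgroup.closure_induction with
    | mem y hy =>
        obtain ⟨m, hm, r, t, rfl⟩ := hy
        have hcA : (m * t - t * m) ∈ Subring.closure (U : Set R) :=
          lieA U hLie m (hMA m hm) t
        have h1 : x * ((m * t - t * m) * w) = 0 := by
          linear_combination (norm := noncomm_ring) slide m (hMA m hm) t
        have h2 := slide _ hcA (w * r)
        calc (x * w) * ((r * (m * t - t * m)) * w)
            = x * ((w * r) * ((m * t - t * m) * w)) := by noncomm_ring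
          _ = x * ((m * t - t * m) * ((w * r) * w)) := h2.symm
          _ = (x * ((m * t - t * m) * w)) * (r * w) := by noncomm_ring
          _ = 0 := by rw [h1, zero_mul]
    | zero => simp
    | add y z hy hz ihy ihz =>
        have e : (x * w) * ((y + z) * w) = (x * w) * (y * w) + (x * w) * (z * w) := by
          noncomm_ring
        rw [e, ihy, ihz, add_zero]
    | neg y hy ihy =>
        have e : (x * w) * ((-y) * w) = -((x * w) * (y * w)) := by noncomm_ring
        rw [e, ihy, neg_zero]
  have hV1σ : ∀ j ∈ JS U, (x * w) * (j * σ w) = 0 := by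
    intro j hj
    rcases hw with h | h
    · rw [h]; exact hV1 j hj
    · rw [h]
      have := hV1 j hj
      linear_combination (norm := noncomm_ring) -this
  rcases annih σ hsp (JS U) (jAbsL U) (jAbsR U) (jSig σ U hσadd hσmul hσinv hσU)
      _ hj₀ hj₀0 (x * w) w hV1 hV1σ with hxw0 | hw0
  swap
  · exact Or.inr hw0
  by_cases hw0 : w = 0
  · exact Or.inr hw0
  have hxmw : ∀ m ∈ MS U, x * (m * w) = 0 := by
    intro m hm
    have hkey : ∀ s : R, x * (m * w) * s * w = 0 := by
      intro s
      have h2 := slide m (hMA m hm) (w * s)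
      calc x * (m * w) * s * w = x * (m * ((w * s) * w)) := by noncomm_ring
        _ = x * ((w * s) * (m * w)) := h2
        _ = (x * w) * (s * (m * w)) := by noncomm_ring
        _ = 0 := by rw [hxw0, zero_mul]
    rcases hsp (x * (m * w)) w hkey
      (fun s => by
        rcases hw with h | h
        · rw [h]; exact hkey s
        · rw [h]; linear_combination (norm := noncomm_ring) -(hkey s)) with h | h
    · exact h
    · exact absurd h hw0
  have hxmwσ : ∀ m ∈ MS U, x * (m * σ w) = 0 := by
    intro m hm
    rcases hw with h | h
    · rw [h]; exact hxmw m hm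
    · rw [h]
      have := hxmw m hm
      linear_combination (norm := noncomm_ring) -this
  exact annih σ hsp (MS U) (mAbsL U) (mAbsR U) (mSig σ U hσadd hσmul hσinv hσU)
    _ hc₀M hc₀0 x w hxmw hxmwσ


end Aux



theorem stmt3 (R : Type*) [Ring R]
  (σ : R → R)
  (hσadd : ∀ x y : R, σ (x + y) = σ x + σ y)
  (hσmul : ∀ x y : R, σ (x * y) = σ y * σ x)
  (hσinv : ∀ x : R, σ (σ x) = x)
  (htor : ∀ x : R, x + x = 0 → x = 0)
  (hsp : ∀ a b : R, (∀ r : R, a * r * b = 0) → (∀ r : R, a * r * σ b = 0) → a = 0 ∨ b = 0)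
  (U : AddSubgroup R)
  (hLie : ∀ u ∈ U, ∀ r : R, u * r - r * u ∈ U)
  (hσU : ∀ u ∈ U, σ u ∈ U)
  (hUnc : ¬ (∀ u ∈ U, ∀ r : R, u * r = r * u))
  (a b : R)
  (h : ((∀ u ∈ U, a * u * b = 0) ∧ (∀ u ∈ U, σ a * u * b = 0)) ∨
       ((∀ u ∈ U, a * u * b = 0) ∧ (∀ u ∈ U, a * u * σ b = 0))) :
    a = 0 ∨ b = 0 := by
  classical
  rcases h with ⟨h1, h2⟩ | ⟨h1, h2⟩
  · -- case 1: a U b = 0 and σ(a) U b = 0; pass to x := σ b, y := a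
    have k2 : ∀ u ∈ U, σ b * (u * σ a) = 0 := by
      intro u hu
      have h0 := h1 (σ u) (hσU u hu)
      have : σ (a * σ u * b) = σ b * (u * σ a) := by
        rw [hσmul, hσmul, hσinv]
      rw [← this, h0, sig_zero σ hσadd]
    have k1 : ∀ u ∈ U, σ b * (u * a) = 0 := by
      intro u hu
      have h0 := h2 (σ u) (hσU u hu)
      have : σ (σ a * σ u * b) = σ b * (u * a) := by
        rw [hσmul, hσmul, hσinv, hσinv]
      rw [← this, h0, sig_zero σ hσadd]
    have hplus : ∀ u ∈ U, σ b * (u * (a + σ a)) = 0 := by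
      intro u hu
      have e : σ b * (u * (a + σ a)) = σ b * (u * a) + σ b * (u * σ a) := by noncomm_ring
      rw [e, k1 u hu, k2 u hu, add_zero]
    have hminus : ∀ u ∈ U, σ b * (u * (a - σ a)) = 0 := by
      intro u hu
      have e : σ b * (u * (a - σ a)) = σ b * (u * a) - σ b * (u * σ a) := by noncomm_ring
      rw [e, k1 u hu, k2 u hu, sub_zero]
    have hsp1 : σ (a + σ a) = a + σ a := by rw [hσadd, hσinv, add_comm]
    have hsp2 : σ (a - σ a) = -(a - σ a) := by rw [sig_sub σ hσadd, hσinv]; abel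
    rcases lemC σ U hσadd hσmul hσinv htor hsp hLie hσU hUnc (σ b) (a + σ a)
        hplus (Or.inl hsp1) with hb0 | hp
    · right
      have : σ (σ b) = σ 0 := by rw [hb0]
      rw [hσinv, sig_zero σ hσadd] at this
      exact this
    rcases lemC σ U hσadd hσmul hσinv htor hsp hLie hσU hUnc (σ b) (a - σ a)
        hminus (Or.inr hsp2) with hb0 | hm
    · right
      have : σ (σ b) = σ 0 := by rw [hb0]
      rw [hσinv, sig_zero σ hσadd] at this
      exact this
    · left
      have key : a + a = 0 := by
        have : (a + σ a) + (a - σ a) = a + a := by abel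
        rw [hp, hm, add_zero] at this
        exact this.symm
      exact htor a key
  · -- case 2: a U b = 0 and a U σ(b) = 0
    have k1 : ∀ u ∈ U, a * (u * b) = 0 := by
      intro u hu
      have := h1 u hu
      rw [← mul_assoc]; exact this
    have k2 : ∀ u ∈ U, a * (u * σ b) = 0 := by
      intro u hu
      have := h2 u hu
      rw [← mul_assoc]; exact this
    have hplus : ∀ u ∈ U, a * (u * (b + σ b)) = 0 := by
      intro u hu
      have e : a * (u * (b + σ b)) = a * (u * b) + a * (u * σ b) := by noncomm_ring
      rw [e, k1 u hu, k2 u hu, add_zero]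
    have hminus : ∀ u ∈ U, a * (u * (b - σ b)) = 0 := by
      intro u hu
      have e : a * (u * (b - σ b)) = a * (u * b) - a * (u * σ b) := by noncomm_ring
      rw [e, k1 u hu, k2 u hu, sub_zero]
    have hsp1 : σ (b + σ b) = b + σ b := by rw [hσadd, hσinv, add_comm]
    have hsp2 : σ (b - σ b) = -(b - σ b) := by rw [sig_sub σ hσadd, hσinv]; abel
    rcases lemC σ U hσadd hσmul hσinv htor hsp hLie hσU hUnc a (b + σ b)
        hplus (Or.inl hsp1) with ha0 | hp
    · exact Or.inl ha0
    rcases lemC σ U hσadd hσmul hσinv htor hsp hLie hσU hUnc a (b - σ b)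
        hminus (Or.inr hsp2) with ha0 | hm
    · exact Or.inl ha0
    · right
      have key : b + b = 0 := by
        have : (b + σ b) + (b - σ b) = b + b := by abel
        rw [hp, hm, add_zero] at this
        exact this.symm
      exact htor b key
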